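/- arXiv:2004.09498 — 6 statements merged into one kernel-verified Lean document; each statement's English description precedes it below -/
import Mathlib

section
/- Let N ≥ 2 and let D = [d_ij] ∈ ℂ^{N×N} be a matrix each of whose rows sums to 1 (i.e. D·𝟏 = 𝟏, where 𝟏 ∈ ℂ^N is the all-ones vector). Define the reduced matrix D̃ = [d̃_ij] ∈ ℂ^{(N−1)×(N−1)} by d̃_ij = d_ij − d_Nj for i, j ∈ {1,…,N−1}. Then for every λ ∈ ℂ with λ ≠ 1, λ is an eigenvalue of D if and only if λ is an eigenvalue of D̃. -/
/-
STATEMENT 0: Let N ≥ 2 (here N = n+1 with n ≥ 1) and let D ∈ ℂ^{N×N} have each row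
summing to 1 (D·𝟏 = 𝟏).  Define the reduced matrix D̃ ∈ ℂ^{(N−1)×(N−1)} by
d̃_ij = d_ij − d_Nj.  Then for every λ ≠ 1, λ is an eigenvalue of D iff λ is an
eigenvalue of D̃ (eigenvalue: ∃ nonzero x with Mx = λx).
-/
theorem reduced_matrix_eigenvalue_iff
    (n : ℕ) (hn : 1 ≤ n)
    (D : Matrix (Fin (n + 1)) (Fin (n + 1)) ℂ)
    (hrow : D.mulVec (fun _ => 1) = fun _ => 1)
    (Dt : Matrix (Fin n) (Fin n) ℂ)
    (hDt : ∀ i j : Fin n, Dt i j = D i.castSucc j.castSucc - D (Fin.last n) j.castSucc)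
    (lam : ℂ) (hlam : lam ≠ 1) :
    (∃ x : Fin (n + 1) → ℂ, x ≠ 0 ∧ D.mulVec x = lam • x) ↔
      (∃ y : Fin n → ℂ, y ≠ 0 ∧ Dt.mulVec y = lam • y) := by
  have hrs1 : ∀ i, ∑ j : Fin (n+1), D i j = 1 := by
    intro i
    have h := congrFun hrow i
    simpa [Matrix.mulVec, dotProduct] using h
  have hrowsum : ∀ i, ∑ j : Fin n, D i j.castSucc = 1 - D i (Fin.last n) := by
    intro i
    have h := hrs1 i
    rw [Fin.sum_univ_castSucc] at h
    exact eq_sub_of_add_eq h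
  constructor
  · rintro ⟨x, hx0, hx⟩
    have hxe : ∀ i, ∑ j : Fin n, D i j.castSucc * x j.castSucc
        = lam * x i - D i (Fin.last n) * x (Fin.last n) := by
      intro i
      have h := congrFun hx i
      simp only [Matrix.mulVec, dotProduct, Pi.smul_apply, smul_eq_mul] at h
      rw [Fin.sum_univ_castSucc] at h
      exact eq_sub_of_add_eq h
    refine ⟨fun j => x j.castSucc - x (Fin.last n), ?_, ?_⟩
    · intro h
      have hconst : ∀ i, x i = x (Fin.last n) := by
        intro i
        induction i using Fin.lastCases with
        | last => rfl
        | cast j =>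
          have := congrFun h j
          simpa [sub_eq_zero] using this
      have hc : x (Fin.last n) ≠ 0 := by
        intro hc
        apply hx0
        funext i
        simp [hconst i, hc]
      have h2 := congrFun hx (Fin.last n)
      simp only [Matrix.mulVec, dotProduct, Pi.smul_apply, smul_eq_mul] at h2
      have h3 : ∑ j : Fin (n+1), D (Fin.last n) j * x j
          = x (Fin.last n) := by
        calc ∑ j : Fin (n+1), D (Fin.last n) j * x j
            = ∑ j : Fin (n+1), D (Fin.last n) j * x (Fin.last n) := by
              refine Finset.sum_congr rfl fun j _ => by rw [hconst j]
          _ = (∑ j : Fin (n+1), D (Fin.last n) j) * x (Fin.last n) := by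
              rw [Finset.sum_mul]
          _ = x (Fin.last n) := by rw [hrs1]; ring
      rw [h3] at h2
      exact hlam (mul_right_cancel₀ hc (by rw [← h2]; ring))
    · funext i
      simp only [Matrix.mulVec, dotProduct, Pi.smul_apply, smul_eq_mul]
      have e1 := hxe i.castSucc
      have e2 := hxe (Fin.last n)
      have r1 := hrowsum i.castSucc
      have r2 := hrowsum (Fin.last n)
      have expand : ∑ j : Fin n, Dt i j * (x j.castSucc - x (Fin.last n))
          = (∑ j : Fin n, D i.castSucc j.castSucc * x j.castSucc)
            - (∑ j : Fin n, D (Fin.last n) j.castSucc * x j.castSucc)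
            - (∑ j : Fin n, D i.castSucc j.castSucc) * x (Fin.last n)
            + (∑ j : Fin n, D (Fin.last n) j.castSucc) * x (Fin.last n) := by
        simp only [Finset.sum_mul, ← Finset.sum_sub_distrib, ← Finset.sum_add_distrib]
        refine Finset.sum_congr rfl fun j _ => by rw [hDt]; ring
      rw [expand, e1, e2, r1, r2]
      ring
  · rintro ⟨y, hy0, hy⟩
    set s : ℂ := ∑ j : Fin n, D (Fin.last n) j.castSucc * y j with hs
    set t : ℂ := s / (lam - 1) with ht
    have hlam1 : lam - 1 ≠ 0 := sub_ne_zero.mpr hlam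
    have hst : s + t = lam * t := by
      rw [ht]; field_simp
      ring
    set x : Fin (n+1) → ℂ := Fin.snoc (fun j => y j + t) t with hxdef
    have hxc : ∀ j : Fin n, x j.castSucc = y j + t := by
      intro j; simp [hxdef, Fin.snoc_castSucc]
    have hxl : x (Fin.last n) = t := by simp [hxdef, Fin.snoc_last]
    refine ⟨x, ?_, ?_⟩
    · intro h
      apply hy0
      have ht0 : t = 0 := by
        have := congrFun h (Fin.last n); simpa [hxl] using this
      funext j
      have := congrFun h j.castSucc
      simp only [hxc, Pi.zero_apply, ht0, add_zero] at this
      exact this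
    · funext i
      simp only [Matrix.mulVec, dotProduct, Pi.smul_apply, smul_eq_mul]
      rw [Fin.sum_univ_castSucc]
      have hsum : ∀ i', ∑ j : Fin n, D i' j.castSucc * x j.castSucc
          = (∑ j : Fin n, D i' j.castSucc * y j) + (1 - D i' (Fin.last n)) * t := by
        intro i'
        rw [← hrowsum i', Finset.sum_mul, ← Finset.sum_add_distrib]
        refine Finset.sum_congr rfl fun j _ => by rw [hxc]; ring
      induction i using Fin.lastCases with
      | last =>
        rw [hsum, hxl, ← hs]
        have : s + (1 - D (Fin.last n) (Fin.last n)) * t + D (Fin.last n) (Fin.last n) * t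
            = s + t := by ring
        rw [this, hst]
      | cast k =>
        have ek := congrFun hy k
        simp only [Matrix.mulVec, dotProduct, Pi.smul_apply, smul_eq_mul] at ek
        have ek2 : ∑ j : Fin n, D k.castSucc j.castSucc * y j = lam * y k + s := by
          rw [← ek, hs, ← Finset.sum_add_distrib]
          refine Finset.sum_congr rfl fun j _ => by rw [hDt]; ring
        rw [hsum, hxl, hxc, ek2]
        have : lam * y k + s + (1 - D k.castSucc (Fin.last n)) * t
            + D k.castSucc (Fin.last n) * t = lam * y k + (s + t) := by ring
        rw [this, hst]
        ring
end

section
/- Let M ∈ ℂ^{n×n} be Schur stable (all eigenvalues of modulus strictly less than 1) and let f : ℕ → ℂⁿ be a sequence with f(k) → 0 as k → ∞. Then every solution of the driven recursion x(k+1) = M x(k) + f(k) satisfies x(k) → 0 as k → ∞, for every initial condition x(0) ∈ ℂⁿ. -/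
open Filter Topology Matrix
open scoped ENNReal NNReal

/-- A real recurrence `a (k+1) ≤ r * a k + b k` with `0 ≤ r < 1`, `a ≥ 0`,
and `b → 0` forces `a → 0`. -/
lemma aux_rec_tendsto {a b : ℕ → ℝ} {r : ℝ} (hr0 : 0 ≤ r) (hr1 : r < 1)
    (ha : ∀ k, 0 ≤ a k)
    (hrec : ∀ k, a (k + 1) ≤ r * a k + b k)
    (hb0 : Filter.Tendsto b Filter.atTop (nhds 0)) :
    Filter.Tendsto a Filter.atTop (nhds 0) := by
  rw [Metric.tendsto_atTop]
  intro ε hε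
  have h1r : 0 < 1 - r := by linarith
  have hε2 : 0 < ε * (1 - r) / 2 := by positivity
  obtain ⟨N, hN⟩ := Metric.tendsto_atTop.mp hb0 _ hε2
  have hbN : ∀ k, N ≤ k → b k < ε * (1 - r) / 2 := by
    intro k hk
    have := hN k hk
    rw [Real.dist_eq, sub_zero] at this
    exact lt_of_le_of_lt (le_abs_self _) this
  have key : ∀ t, a (N + t) ≤ r ^ t * a N + ε / 2 := by
    intro t
    induction t with
    | zero => simp; linarith
    | succ t ih =>
      have hb' : b (N + t) < ε * (1 - r) / 2 := hbN _ (Nat.le_add_right _ _)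
      have h2 := hrec (N + t)
      have h3 : a (N + t + 1) ≤ r * (r ^ t * a N + ε / 2) + ε * (1 - r) / 2 := by
        have := mul_le_mul_of_nonneg_left ih hr0
        linarith
      have : N + (t + 1) = N + t + 1 := by omega
      rw [this]
      calc a (N + t + 1) ≤ r * (r ^ t * a N + ε / 2) + ε * (1 - r) / 2 := h3
        _ = r ^ (t + 1) * a N + (r * ε / 2 + ε * (1 - r) / 2) := by ring
        _ ≤ r ^ (t + 1) * a N + ε / 2 := by nlinarith
  obtain ⟨T, hT⟩ : ∃ T, r ^ T * a N < ε / 2 := by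
    have h4 : Filter.Tendsto (fun t : ℕ => r ^ t * a N) Filter.atTop (nhds 0) := by
      simpa using (tendsto_pow_atTop_nhds_zero_of_lt_one hr0 hr1).mul_const (a N)
    obtain ⟨T, hT⟩ := Metric.tendsto_atTop.mp h4 _ (by positivity : (0:ℝ) < ε / 2)
    refine ⟨T, ?_⟩
    have := hT T le_rfl
    rw [Real.dist_eq, sub_zero] at this
    exact lt_of_le_of_lt (le_abs_self _) this
  refine ⟨N + T, fun k hk => ?_⟩
  obtain ⟨t, rfl⟩ : ∃ t, k = N + t := ⟨k - N, by omega⟩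
  have hTt : T ≤ t := by omega
  have hmono : r ^ t * a N ≤ r ^ T * a N :=
    mul_le_mul_of_nonneg_right (pow_le_pow_of_le_one hr0 hr1.le hTt) (ha N)
  have : a (N + t) < ε := by
    have := key t
    linarith
  rw [Real.dist_eq, sub_zero, abs_of_nonneg (ha _)]
  exact this

section MatrixNorm

attribute [local instance]
  Matrix.linftyOpNormedAddCommGroup Matrix.linftyOpNormedRing
  Matrix.linftyOpNormedAlgebra

/-- Any spectrum point of a matrix admits an eigenvector. -/
lemma aux_spectrum_eigen (n : ℕ) (M : Matrix (Fin n) (Fin n) ℂ) (μ : ℂ)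
    (hμ : μ ∈ spectrum ℂ M) : ∃ v : Fin n → ℂ, v ≠ 0 ∧ M.mulVec v = μ • v := by
  rw [spectrum.mem_iff, Matrix.isUnit_iff_isUnit_det, isUnit_iff_ne_zero, not_not] at hμ
  obtain ⟨v, hv0, hv⟩ := Matrix.exists_mulVec_eq_zero_iff.mpr hμ
  refine ⟨v, hv0, ?_⟩
  rw [Matrix.sub_mulVec, Algebra.algebraMap_eq_smul_one, Matrix.smul_mulVec,
    Matrix.one_mulVec, sub_eq_zero] at hv
  exact hv.symm

/-- Geometric bound on powers of a Schur stable matrix. -/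
lemma aux_geom_bound (n : ℕ) (hn : 0 < n) (M : Matrix (Fin n) (Fin n) ℂ)
    (h : ∀ μ ∈ spectrum ℂ M, ‖μ‖₊ < 1) :
    ∃ C r : ℝ, 0 < r ∧ r < 1 ∧ 1 ≤ C ∧ ∀ k : ℕ, ‖M ^ k‖ ≤ C * r ^ k := by
  haveI : NeZero n := ⟨hn.ne'⟩
  haveI : Nonempty (Fin n) := Fin.pos_iff_nonempty.mp hn
  haveI : CompleteSpace (Matrix (Fin n) (Fin n) ℂ) := FiniteDimensional.complete ℂ _
  have hsr : spectralRadius ℂ M < 1 := by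
    have := spectrum.spectralRadius_lt_of_forall_lt (a := M) (r := 1) h
    simpa using this
  obtain ⟨r, hr1, hr2⟩ := ENNReal.lt_iff_exists_nnreal_btwn.mp hsr
  have hrlt1 : (r : ℝ) < 1 := by exact_mod_cast hr2
  have hrpos : 0 < (r : ℝ) := by
    have : (0 : ℝ≥0∞) < (r : ℝ≥0∞) := lt_of_le_of_lt zero_le hr1
    exact_mod_cast this
  have gel := spectrum.pow_nnnorm_pow_one_div_tendsto_nhds_spectralRadius M
  have hev : ∀ᶠ k : ℕ in atTop, (‖M ^ k‖₊ : ℝ≥0∞) ^ (1 / (k : ℝ)) < (r : ℝ≥0∞) :=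
    gel.eventually (eventually_lt_nhds hr1)
  obtain ⟨N, hN⟩ := eventually_atTop.mp hev
  have hbk : ∀ k : ℕ, N ≤ k → 1 ≤ k → ‖M ^ k‖ ≤ (r : ℝ) ^ k := by
    intro k hkN hk1
    have h1 := (hN k hkN).le
    have hk0 : (k : ℝ) ≠ 0 := by positivity
    have h2 : ((‖M ^ k‖₊ : ℝ≥0∞) ^ (1 / (k : ℝ))) ^ (k : ℝ) ≤ (r : ℝ≥0∞) ^ (k : ℝ) :=
      ENNReal.rpow_le_rpow h1 (by positivity)
    rw [← ENNReal.rpow_mul, one_div_mul_cancel hk0, ENNReal.rpow_one,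
      ENNReal.rpow_natCast, ← ENNReal.coe_pow, ENNReal.coe_le_coe] at h2
    have : ‖M ^ k‖ = ((‖M ^ k‖₊ : ℝ≥0) : ℝ) := rfl
    rw [this]
    exact_mod_cast h2
  set K := max N 1 with hK
  refine ⟨1 + ∑ j ∈ Finset.range K, ‖M ^ j‖ / (r : ℝ) ^ j, (r : ℝ), hrpos, hrlt1, ?_, ?_⟩
  · have : 0 ≤ ∑ j ∈ Finset.range K, ‖M ^ j‖ / (r : ℝ) ^ j :=
      Finset.sum_nonneg fun j _ => by positivity
    linarith
  · intro k
    rcases lt_or_ge k K with hk | hk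
    · have hmem : k ∈ Finset.range K := Finset.mem_range.mpr hk
      have hle : ‖M ^ k‖ / (r : ℝ) ^ k ≤ ∑ j ∈ Finset.range K, ‖M ^ j‖ / (r : ℝ) ^ j :=
        Finset.single_le_sum (f := fun j => ‖M ^ j‖ / (r : ℝ) ^ j)
          (fun j _ => by positivity) hmem
      have hrk : (0 : ℝ) < (r : ℝ) ^ k := by positivity
      calc ‖M ^ k‖ = (‖M ^ k‖ / (r : ℝ) ^ k) * (r : ℝ) ^ k := by field_simp
        _ ≤ (1 + ∑ j ∈ Finset.range K, ‖M ^ j‖ / (r : ℝ) ^ j) * (r : ℝ) ^ k := by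
            apply mul_le_mul_of_nonneg_right _ hrk.le
            linarith
    · have h1 : ‖M ^ k‖ ≤ (r : ℝ) ^ k := hbk k (le_trans (le_max_left _ _) hk)
        (le_trans (le_max_right _ _) hk)
      have : 0 ≤ ∑ j ∈ Finset.range K, ‖M ^ j‖ / (r : ℝ) ^ j :=
        Finset.sum_nonneg fun j _ => by positivity
      have hrk : (0 : ℝ) ≤ (r : ℝ) ^ k := by positivity
      nlinarith

/-
STATEMENT 4: If M ∈ ℂ^{n×n} is Schur stable and f(k) → 0, then every solution of
x(k+1) = M x(k) + f(k) satisfies x(k) → 0, for every initial condition x(0).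
-/
theorem schur_stable_driven_tendsto_zero
    (n : ℕ) (M : Matrix (Fin n) (Fin n) ℂ)
    (hM : ∀ μ : ℂ, (∃ x : Fin n → ℂ, x ≠ 0 ∧ M.mulVec x = μ • x) → ‖μ‖ < 1)
    (f : ℕ → Fin n → ℂ)
    (hf : Filter.Tendsto f Filter.atTop (nhds 0))
    (x : ℕ → Fin n → ℂ)
    (hx : ∀ k : ℕ, x (k + 1) = M.mulVec (x k) + f k) :
    Filter.Tendsto x Filter.atTop (nhds 0) := by
  rcases Nat.eq_zero_or_pos n with hn | hn
  · subst hn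
    have hxx : x = fun _ => 0 := funext fun k => Subsingleton.elim _ _
    rw [hxx]
    exact tendsto_const_nhds
  have hspec : ∀ μ ∈ spectrum ℂ M, ‖μ‖₊ < 1 := by
    intro μ hμ
    obtain ⟨v, hv0, hv⟩ := aux_spectrum_eigen n M μ hμ
    have := hM μ ⟨v, hv0, hv⟩
    exact_mod_cast this
  obtain ⟨C, r, hr0, hr1, hC1, hCr⟩ := aux_geom_bound n hn M hspec
  -- explicit solution formula
  have hform : ∀ k, x k = (M ^ k).mulVec (x 0)
      + ∑ j ∈ Finset.range k, (M ^ (k - 1 - j)).mulVec (f j) := by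
    intro k
    induction k with
    | zero => simp
    | succ k ih =>
      have hsum : M *ᵥ (∑ j ∈ Finset.range k, (M ^ (k - 1 - j)) *ᵥ f j)
          = ∑ j ∈ Finset.range k, M *ᵥ ((M ^ (k - 1 - j)) *ᵥ f j) := by
        have h := map_sum M.mulVecLin (fun j => (M ^ (k - 1 - j)) *ᵥ f j) (Finset.range k)
        simpa only [Matrix.mulVecLin_apply] using h
      rw [hx k, ih, Matrix.mulVec_add, hsum, Finset.sum_range_succ]
      have e1 : M.mulVec ((M ^ k).mulVec (x 0)) = (M ^ (k + 1)).mulVec (x 0) := by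
        rw [Matrix.mulVec_mulVec, ← pow_succ']
      have e2 : ∀ j ∈ Finset.range k,
          M.mulVec ((M ^ (k - 1 - j)).mulVec (f j)) = (M ^ (k + 1 - 1 - j)).mulVec (f j) := by
        intro j hj
        have hj' : j < k := Finset.mem_range.mp hj
        have hkj : k + 1 - 1 - j = (k - 1 - j) + 1 := by omega
        rw [Matrix.mulVec_mulVec, hkj, pow_succ']
      rw [e1, Finset.sum_congr rfl e2]
      have e3 : (M ^ (k + 1 - 1 - k)).mulVec (f k) = f k := by
        simp [Matrix.one_mulVec]
      rw [e3]
      abel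
  -- the driven geometric sum
  set g : ℕ → ℝ := fun k => ∑ j ∈ Finset.range k, r ^ (k - 1 - j) * ‖f j‖ with hg
  have hfn : Filter.Tendsto (fun k => ‖f k‖) Filter.atTop (nhds 0) := by
    simpa using hf.norm
  have hgrec : ∀ k, g (k + 1) ≤ r * g k + ‖f k‖ := by
    intro k
    have : g (k + 1) = r * g k + ‖f k‖ := by
      rw [hg]
      simp only
      rw [Finset.sum_range_succ, Finset.mul_sum]
      congr 1
      · refine Finset.sum_congr rfl fun j hj => ?_
        have hj' : j < k := Finset.mem_range.mp hj
        have : k + 1 - 1 - j = (k - 1 - j) + 1 := by omega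
        rw [this, pow_succ']
        ring
      · simp
    exact this.le
  have hg0 : Filter.Tendsto g Filter.atTop (nhds 0) :=
    aux_rec_tendsto hr0.le hr1
      (fun k => Finset.sum_nonneg fun j _ => by positivity) hgrec hfn
  -- norm bound on the solution
  have hbound : ∀ k, ‖x k‖ ≤ C * ‖x 0‖ * r ^ k + C * g k := by
    intro k
    rw [hform k]
    calc ‖(M ^ k).mulVec (x 0) + ∑ j ∈ Finset.range k, (M ^ (k - 1 - j)).mulVec (f j)‖
        ≤ ‖(M ^ k).mulVec (x 0)‖ + ‖∑ j ∈ Finset.range k, (M ^ (k - 1 - j)).mulVec (f j)‖ :=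
          norm_add_le _ _
      _ ≤ ‖M ^ k‖ * ‖x 0‖ + ∑ j ∈ Finset.range k, ‖(M ^ (k - 1 - j)).mulVec (f j)‖ := by
          gcongr
          · exact Matrix.linfty_opNorm_mulVec _ _
          · exact norm_sum_le _ _
      _ ≤ C * r ^ k * ‖x 0‖ + ∑ j ∈ Finset.range k, (C * r ^ (k - 1 - j)) * ‖f j‖ := by
          gcongr with j hj
          · exact hCr k
          · exact le_trans (Matrix.linfty_opNorm_mulVec _ _)
              (mul_le_mul_of_nonneg_right (hCr _) (norm_nonneg _))
      _ = C * ‖x 0‖ * r ^ k + C * g k := by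
          rw [hg]
          simp only
          rw [Finset.mul_sum]
          congr 1
          · ring
          · refine Finset.sum_congr rfl fun j hj => ?_
            ring
  have hlim : Filter.Tendsto (fun k => C * ‖x 0‖ * r ^ k + C * g k) Filter.atTop (nhds 0) := by
    have h1 : Filter.Tendsto (fun k : ℕ => C * ‖x 0‖ * r ^ k) Filter.atTop (nhds 0) := by
      simpa using (tendsto_pow_atTop_nhds_zero_of_lt_one hr0.le hr1).const_mul (C * ‖x 0‖)
    have h2 := hg0.const_mul C
    simpa using h1.add h2
  rw [tendsto_zero_iff_norm_tendsto_zero]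
  exact squeeze_zero (fun k => norm_nonneg _) hbound hlim

end MatrixNorm
end

section
/- Let A ∈ ℝ^{n×n}, B ∈ ℝ^{n×m}, C ∈ ℝ^{p×n}, K ∈ ℝ^{m×n}, H ∈ ℝ^{n×p}, N ≥ 2, D = [d_ij] ∈ ℝ^{N×N}, and let D̃ ∈ ℝ^{(N−1)×(N−1)} be defined by d̃_ij = d_ij − d_Nj. Suppose sequences x_i, η_i, x̂_i : ℕ → ℝⁿ (i = 1,…,N) satisfy x_i(k+1) = A x_i(k) − BK η_i(k), η_i(k+1) = A η_i(k) − BK η_i(k) + A x̂_i(k) − A ζ̂_i(k), x̂_i(k+1) = A x̂_i(k) − BK ζ̂_i(k) + H(ζ_i(k) − C x̂_i(k)), where ζ_i(k) = Σ_{j=1}^N d_ij C(x_i(k) − x_j(k)) and ζ̂_i(k) = Σ_{j=1}^N d_ij (η_i(k) − η_j(k)). Define the differenced stacked vectors x̄ = (x_1 − x_N, …, x_{N−1} − x_N), η̄ = (η_1 − η_N, …, η_{N−1} − η_N), x̂̄ = (x̂_1 − x̂_N, …, x̂_{N−1} − x̂_N), and set ē(k) = x̄(k) − η̄(k) and ẽ(k)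 = (x̄(k) − x̂̄(k)) − (D̃ ⊗ I_n) x̄(k). Then for all k ∈ ℕ: x̄(k+1) = (I_{N−1} ⊗ (A − BK)) x̄(k) + (I_{N−1} ⊗ BK) ē(k), ē(k+1) = (D̃ ⊗ A) ē(k) + (I_{N−1} ⊗ A) ẽ(k), and ẽ(k+1) = (I_{N−1} ⊗ (A − HC)) ẽ(k). -/
open Kronecker

section helpers
open Kronecker

lemma mulVec_sum_smul {pp nn : Type*} [Fintype nn] {ι : Type*} [Fintype ι] (M : Matrix pp nn ℝ)
    (c : ι → ℝ) (f : ι → nn → ℝ) :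
    M.mulVec (∑ j, c j • f j) = ∑ j, c j • M.mulVec (f j) := by
  rw [← Matrix.mulVecLin_apply, map_sum]
  simp [Matrix.mulVecLin_apply]

lemma kron_mulVec_row {ν n : ℕ} (M : Matrix (Fin ν) (Fin ν) ℝ) (P : Matrix (Fin n) (Fin n) ℝ)
    (v : Fin ν × Fin n → ℝ) (i : Fin ν) (a : Fin n) :
    (M ⊗ₖ P).mulVec v (i, a) = P.mulVec (∑ j, M i j • fun b => v (j, b)) a := by
  simp only [Matrix.mulVec, dotProduct, Fintype.sum_prod_type,
    Matrix.kroneckerMap_apply, Finset.sum_apply, Pi.smul_apply, smul_eq_mul, Finset.mul_sum]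
  rw [Finset.sum_comm]
  exact Finset.sum_congr rfl fun b _ => Finset.sum_congr rfl fun j _ => by ring

lemma kron_one_mulVec_row {ν n : ℕ} (P : Matrix (Fin n) (Fin n) ℝ)
    (v : Fin ν × Fin n → ℝ) (i : Fin ν) (a : Fin n) :
    ((1 : Matrix (Fin ν) (Fin ν) ℝ) ⊗ₖ P).mulVec v (i, a) = P.mulVec (fun b => v (i, b)) a := by
  rw [kron_mulVec_row]
  congr 1
  simp [Matrix.one_apply, ite_smul, Finset.sum_ite_eq]

lemma sum_Dt_smul {ν : ℕ} {V : Type*} [AddCommGroup V] [Module ℝ V]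
    (D : Matrix (Fin (ν+1)) (Fin (ν+1)) ℝ)
    (Dt : Matrix (Fin ν) (Fin ν) ℝ)
    (hDt : ∀ i j : Fin ν, Dt i j = D i.castSucc j.castSucc - D (Fin.last ν) j.castSucc)
    (hDrow : ∀ i, ∑ j, D i j = 1)
    (W : Fin (ν+1) → V) (i : Fin ν) :
    ∑ j : Fin ν, Dt i j • (W j.castSucc - W (Fin.last ν))
      = (∑ j, D i.castSucc j • W j) - (∑ j, D (Fin.last ν) j • W j) := by
  have h2 : ∀ r : Fin (ν+1), (∑ j : Fin ν, D r j.castSucc) = 1 - D r (Fin.last ν) := by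
    intro r
    have h := hDrow r
    rw [Fin.sum_univ_castSucc] at h
    linarith
  rw [Fin.sum_univ_castSucc (fun j => D i.castSucc j • W j),
      Fin.sum_univ_castSucc (fun j => D (Fin.last ν) j • W j)]
  have hsum : (∑ j : Fin ν, Dt i j) = D (Fin.last ν) (Fin.last ν) - D i.castSucc (Fin.last ν) := by
    simp only [hDt]
    rw [Finset.sum_sub_distrib, h2, h2]
    ring
  calc ∑ j : Fin ν, Dt i j • (W j.castSucc - W (Fin.last ν))
      = (∑ j : Fin ν, D i.castSucc j.castSucc • W j.castSucc)
        - (∑ j : Fin ν, D (Fin.last ν) j.castSucc • W j.castSucc)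
        - (∑ j : Fin ν, Dt i j) • W (Fin.last ν) := by
        simp only [smul_sub, Finset.sum_sub_distrib, hDt, sub_smul, Finset.sum_smul]
        try abel
    _ = _ := by
        rw [hsum, sub_smul]
        abel

end helpers


theorem partial_state_closed_loop_identities
    (n m p ν : ℕ) (hν : 1 ≤ ν)
    (A : Matrix (Fin n) (Fin n) ℝ) (B : Matrix (Fin n) (Fin m) ℝ)
    (C : Matrix (Fin p) (Fin n) ℝ)
    (K : Matrix (Fin m) (Fin n) ℝ) (H : Matrix (Fin n) (Fin p) ℝ)
    (D : Matrix (Fin (ν + 1)) (Fin (ν + 1)) ℝ)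
    (hDrow : ∀ i, ∑ j, D i j = 1)
    (Dt : Matrix (Fin ν) (Fin ν) ℝ)
    (hDt : ∀ i j : Fin ν, Dt i j = D i.castSucc j.castSucc - D (Fin.last ν) j.castSucc)
    (x η xh : Fin (ν + 1) → ℕ → Fin n → ℝ)
    (hx : ∀ i k, x i (k + 1) = A.mulVec (x i k) - (B * K).mulVec (η i k))
    (hη : ∀ i k, η i (k + 1) =
        A.mulVec (η i k) - (B * K).mulVec (η i k)
          + A.mulVec (xh i k)
          - A.mulVec (∑ j, D i j • (η i k - η j k)))
    (hxh : ∀ i k, xh i (k + 1) =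
        A.mulVec (xh i k)
          - (B * K).mulVec (∑ j, D i j • (η i k - η j k))
          + H.mulVec ((∑ j, D i j • C.mulVec (x i k - x j k))
              - C.mulVec (xh i k)))
    (xb ηb xhb eb et : ℕ → Fin ν × Fin n → ℝ)
    (hxb : ∀ k q, xb k q = x q.1.castSucc k q.2 - x (Fin.last ν) k q.2)
    (hηb : ∀ k q, ηb k q = η q.1.castSucc k q.2 - η (Fin.last ν) k q.2)
    (hxhb : ∀ k q, xhb k q = xh q.1.castSucc k q.2 - xh (Fin.last ν) k q.2)
    (heb : ∀ k, eb k = xb k - ηb k)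
    (het : ∀ k, et k = (xb k - xhb k)
        - (Dt ⊗ₖ (1 : Matrix (Fin n) (Fin n) ℝ)).mulVec (xb k)) :
    (∀ k, xb (k + 1)
        = ((1 : Matrix (Fin ν) (Fin ν) ℝ) ⊗ₖ (A - B * K)).mulVec (xb k)
          + ((1 : Matrix (Fin ν) (Fin ν) ℝ) ⊗ₖ (B * K)).mulVec (eb k)) ∧
    (∀ k, eb (k + 1)
        = (Dt ⊗ₖ A).mulVec (eb k)
          + ((1 : Matrix (Fin ν) (Fin ν) ℝ) ⊗ₖ A).mulVec (et k)) ∧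
    (∀ k, et (k + 1)
        = ((1 : Matrix (Fin ν) (Fin ν) ℝ) ⊗ₖ (A - H * C)).mulVec (et k)) := by
  -- pointwise/vector reformulations of the stacked variables
  have hxbv : ∀ k (i : Fin ν),
      (fun b => xb k (i, b)) = x i.castSucc k - x (Fin.last ν) k :=
    fun k i => funext fun b => hxb k (i, b)
  have hebv : ∀ k (i : Fin ν),
      (fun b => eb k (i, b))
        = (x i.castSucc k - η i.castSucc k) - (x (Fin.last ν) k - η (Fin.last ν) k) := by
    intro k i
    funext b
    rw [heb]
    simp only [Pi.sub_apply, hxb, hηb]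
    ring
  -- row-sum identities
  have hζη : ∀ (i : Fin (ν+1)) k,
      (∑ j, D i j • (η i k - η j k)) = η i k - ∑ j, D i j • η j k := by
    intro i k
    simp only [smul_sub, Finset.sum_sub_distrib, ← Finset.sum_smul, hDrow, one_smul]
  have hζC : ∀ (i : Fin (ν+1)) k,
      (∑ j, D i j • C.mulVec (x i k - x j k))
        = C.mulVec (x i k) - C.mulVec (∑ j, D i j • x j k) := by
    intro i k
    simp only [Matrix.mulVec_sub, smul_sub, Finset.sum_sub_distrib, ← Finset.sum_smul,
      hDrow, one_smul]
    rw [mulVec_sum_smul C (fun j => D i j) (fun j => x j k)]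
  -- the observer-consensus error in per-agent form
  have hetv : ∀ k (i : Fin ν),
      (fun b => et k (i, b))
        = (x i.castSucc k - xh i.castSucc k - ∑ j, D i.castSucc j • x j k)
          - (x (Fin.last ν) k - xh (Fin.last ν) k - ∑ j, D (Fin.last ν) j • x j k) := by
    intro k i
    have h1 : (fun b => et k (i, b))
        = ((fun b => xb k (i, b)) - (fun b => xhb k (i, b)))
          - (∑ j, Dt i j • fun b => xb k (j, b)) := by
      funext b
      rw [het]
      simp only [Pi.sub_apply]
      rw [kron_mulVec_row, Matrix.one_mulVec]
    rw [h1]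
    have hxhbv : (fun b => xhb k (i, b)) = xh i.castSucc k - xh (Fin.last ν) k :=
      funext fun b => hxhb k (i, b)
    rw [hxhbv]
    simp only [hxbv]
    rw [sum_Dt_smul D Dt hDt hDrow (fun j => x j k) i]
    abel
  -- closed-loop identity for x_i - η_i
  have hxη : ∀ (i : Fin (ν+1)) k, x i (k+1) - η i (k+1)
      = A.mulVec (x i k - xh i k - ∑ j, D i j • η j k) := by
    intro i k
    rw [hx, hη, hζη]
    simp only [Matrix.mulVec_sub]
    abel
  -- closed-loop identity for the sum s_i = ∑ d_ij x_j
  have hs_step : ∀ (i : Fin (ν+1)) k, (∑ j, D i j • x j (k+1))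
      = A.mulVec (∑ j, D i j • x j k) - (B*K).mulVec (∑ j, D i j • η j k) := by
    intro i k
    rw [mulVec_sum_smul, mulVec_sum_smul]
    simp only [hx, smul_sub, Finset.sum_sub_distrib]
  -- closed-loop identity for φ_i = x_i - x̂_i - s_i
  have hφ : ∀ (i : Fin (ν+1)) k,
      (x i (k+1) - xh i (k+1) - ∑ j, D i j • x j (k+1))
        = (A - H*C).mulVec (x i k - xh i k - ∑ j, D i j • x j k) := by
    intro i k
    rw [hx, hxh, hζη, hζC, hs_step]
    simp only [Matrix.sub_mulVec, Matrix.mulVec_sub, ← Matrix.mulVec_mulVec]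
    abel
  refine ⟨?_, ?_, ?_⟩
  · -- first identity
    intro k
    funext q
    obtain ⟨i, a⟩ := q
    simp only [Pi.add_apply]
    rw [kron_one_mulVec_row, kron_one_mulVec_row, hxbv, hebv, hxb]
    simp only [hx, Matrix.sub_mulVec, Matrix.mulVec_sub, Pi.sub_apply, Pi.add_apply]
    ring
  · -- second identity
    intro k
    funext q
    obtain ⟨i, a⟩ := q
    simp only [Pi.add_apply]
    rw [kron_mulVec_row, kron_one_mulVec_row, hetv]
    simp only [hebv]
    rw [sum_Dt_smul D Dt hDt hDrow (fun j => x j k - η j k) i]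
    have e1 : x i.castSucc (k+1) a - η i.castSucc (k+1) a
        = A.mulVec (x i.castSucc k - xh i.castSucc k - ∑ j, D i.castSucc j • η j k) a :=
      congrFun (hxη i.castSucc k) a
    have e2 : x (Fin.last ν) (k+1) a - η (Fin.last ν) (k+1) a
        = A.mulVec (x (Fin.last ν) k - xh (Fin.last ν) k - ∑ j, D (Fin.last ν) j • η j k) a :=
      congrFun (hxη (Fin.last ν) k) a
    have key : A.mulVec (x i.castSucc k - xh i.castSucc k - ∑ j, D i.castSucc j • η j k)
          - A.mulVec (x (Fin.last ν) k - xh (Fin.last ν) k - ∑ j, D (Fin.last ν) j • η j k)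
        = A.mulVec ((∑ j, D i.castSucc j • (x j k - η j k))
              - (∑ j, D (Fin.last ν) j • (x j k - η j k)))
          + A.mulVec ((x i.castSucc k - xh i.castSucc k - ∑ j, D i.castSucc j • x j k)
              - (x (Fin.last ν) k - xh (Fin.last ν) k - ∑ j, D (Fin.last ν) j • x j k)) := by
      rw [← Matrix.mulVec_sub, ← Matrix.mulVec_add]
      congr 1
      simp only [smul_sub, Finset.sum_sub_distrib]
      abel
    have key' := congrFun key a
    simp only [Pi.sub_apply, Pi.add_apply] at key'
    have lhs : eb (k+1) (i, a)
        = x i.castSucc (k+1) a - x (Fin.last ν) (k+1) a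
          - (η i.castSucc (k+1) a - η (Fin.last ν) (k+1) a) := by
      rw [heb]
      simp only [Pi.sub_apply, hxb, hηb]
    rw [lhs]
    linarith [e1, e2, key']
  · -- third identity
    intro k
    funext q
    obtain ⟨i, a⟩ := q
    rw [kron_one_mulVec_row, hetv]
    have l : et (k+1) (i, a)
        = ((x i.castSucc (k+1) - xh i.castSucc (k+1) - ∑ j, D i.castSucc j • x j (k+1))
          - (x (Fin.last ν) (k+1) - xh (Fin.last ν) (k+1)
              - ∑ j, D (Fin.last ν) j • x j (k+1))) a :=
      congrFun (hetv (k+1) i) a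
    rw [l, hφ i.castSucc k, hφ (Fin.last ν) k, ← Matrix.mulVec_sub]
end

section
/- (Theorem 4, reduced form: scalable regulated output synchronization of homogenized agents.) Let A ∈ ℝ^{n×n} have all its eigenvalues in the closed unit disc of ℂ, let B ∈ ℝ^{n×m} and C ∈ ℝ^{p×n}, and suppose K ∈ ℝ^{m×n} and H ∈ ℝ^{n×p} are such that A − BK and A − HC are Schur stable. Let N ≥ 1 and let D̄ = [d̄_ij] ∈ ℝ^{N×N} be a matrix all of whose eigenvalues have modulus strictly less than 1. Let the exosystem be x_r(k+1) = A x_r(k), y_r(k) = C x_r(k). For each i, let d_i : ℕ → ℝ^m be generated by ω_i(k+1) = A_{i,s} ω_i(k), d_i(k) = C_{i,s} ω_i(k) with A_{i,s} Schur stable. Consider sequences x_i, η_i, x̂_i : ℕ → ℝⁿ satisfying x_i(k+1) = A x_i(k) + B(v_i(k) + d_i(k)), y_i(k) = C x_i(k), with protocol η_i(k+1) = A η_i(k) + B v_i(k) + A x̂_i(k) − A ζ̌_i(k), x̂_i(k+1) = A x̂_i(k) + H(ζ̄_i(k) − C x̂_i(k)) − BK ζ̌_i(k), v_i(k) = −K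 η_i(k), where ζ̄_i(k) = (y_i(k) − y_r(k)) − Σ_{j=1}^N d̄_ij (y_j(k) − y_r(k)) and ζ̌_i(k) = η_i(k) − Σ_{j=1}^N d̄_ij η_j(k). Then for all initial conditions x_i(0), η_i(0), x̂_i(0), ω_i(0), x_r(0), lim_{k→∞} (x_i(k) − x_r(k)) = 0, and hence lim_{k→∞} (y_i(k) − y_r(k)) = 0, for all i ∈ {1,…,N}. -/
/-
STATEMENT 10 (Theorem 4, reduced form): scalable regulated output synchronization of
homogenized agents.  A has all eigenvalues in the closed unit disc, A − BK and
A − HC Schur stable, D̄ has all eigenvalues of modulus < 1.  Exosystem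
x_r(k+1) = A x_r, y_r = C x_r.  Disturbances d_i output of Schur stable generators.
Agents x_i(k+1) = A x_i + B(v_i + d_i), y_i = C x_i, protocol
η_i(k+1) = A η_i + B v_i + A x̂_i − A ζ̌_i,
x̂_i(k+1) = A x̂_i + H(ζ̄_i − C x̂_i) − BK ζ̌_i, v_i = −K η_i,
with ζ̄_i = (y_i − y_r) − Σ_j d̄_ij (y_j − y_r), ζ̌_i = η_i − Σ_j d̄_ij η_j.
Then x_i − x_r → 0 and hence y_i − y_r → 0 for all i.
-/

open Filter Matrix

attribute [local instance] Matrix.linftyOpNormedRing Matrix.linftyOpNormedAlgebra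

lemma map_pow_ofReal {q : ℕ} (M : Matrix (Fin q) (Fin q) ℝ) (k : ℕ) :
    (M.map Complex.ofReal) ^ k = (M ^ k).map Complex.ofReal := by
  induction k with
  | zero => simp [Matrix.map_one]
  | succ k ih =>
      rw [pow_succ, pow_succ, ih]
      ext i j
      simp [Matrix.mul_apply, Matrix.map_apply]

lemma schur_entry_bound {q : ℕ} (M : Matrix (Fin q) (Fin q) ℝ)
    (hM : ∀ μ : ℂ, (∃ x : Fin q → ℂ, x ≠ 0 ∧
        (M.map Complex.ofReal).mulVec x = μ • x) → ‖μ‖ < 1) :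
    ∃ c r : ℝ, 0 < c ∧ 0 < r ∧ r < 1 ∧ ∀ k i j, |(M ^ k) i j| ≤ c * r ^ k := by
  classical
  set Mc := M.map (Complex.ofReal : ℝ → ℂ) with hMcdef
  haveI : CompleteSpace (Matrix (Fin q) (Fin q) ℂ) := FiniteDimensional.complete ℂ _
  have hspec : ∀ μ ∈ spectrum ℂ Mc, ‖μ‖ < 1 := by
    intro μ hμ
    rw [← AlgEquiv.spectrum_eq (Matrix.toLinAlgEquiv' :
      Matrix (Fin q) (Fin q) ℂ ≃ₐ[ℂ] _) Mc] at hμ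
    have hev : Module.End.HasEigenvalue (Matrix.toLinAlgEquiv' Mc) μ :=
      Module.End.hasEigenvalue_iff_mem_spectrum.mpr hμ
    obtain ⟨v, hv⟩ := hev.exists_hasEigenvector
    refine hM μ ⟨v, hv.right, ?_⟩
    have := hv.apply_eq_smul
    simpa [Matrix.toLinAlgEquiv'_apply] using this
  have hρ : spectralRadius ℂ Mc < 1 := by
    rcases Set.eq_empty_or_nonempty (spectrum ℂ Mc) with h | h
    · simp [spectralRadius, h]
    · obtain ⟨μ0, hμ0, hmax⟩ := (spectrum.isCompact Mc).exists_isMaxOn h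
        (continuous_norm.continuousOn)
      calc spectralRadius ℂ Mc ≤ (‖μ0‖₊ : ENNReal) := by
            refine iSup₂_le fun μ hμ => ?_
            exact_mod_cast (hmax hμ : ‖μ‖ ≤ ‖μ0‖)
        _ < 1 := by exact_mod_cast hspec μ0 hμ0
  obtain ⟨r0, hρr0, hr01⟩ := ENNReal.lt_iff_exists_nnreal_btwn.mp hρ
  set r : NNReal := max r0 (1/2) with hrdef
  have hρr : spectralRadius ℂ Mc < (r : ENNReal) :=
    lt_of_lt_of_le hρr0 (by exact_mod_cast le_max_left r0 (1/2))
  have hr1 : (r : ℝ) < 1 := by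
    have h1 : (r0 : ℝ) < 1 := by exact_mod_cast hr01
    have h2 : (r : ℝ) = max (r0 : ℝ) ((1:ℝ)/2) := by
      rw [hrdef]; push_cast; rfl
    rw [h2]; exact max_lt h1 (by norm_num)
  have hr0 : 0 < (r : ℝ) := by
    have : (1/2 : NNReal) ≤ r := le_max_right _ _
    have : ((1:ℝ)/2) ≤ (r : ℝ) := by exact_mod_cast this
    linarith
  have gel := spectrum.pow_nnnorm_pow_one_div_tendsto_nhds_spectralRadius Mc
  have hev : ∀ᶠ k : ℕ in atTop,
      ((‖Mc ^ k‖₊ : ENNReal)) ^ (1/(k:ℝ)) < (r : ENNReal) :=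
    gel.eventually_lt_const hρr
  obtain ⟨K0, hK0⟩ := eventually_atTop.mp hev
  set K1 := max K0 1 with hK1def
  have hnorm : ∀ k, K1 ≤ k → ‖Mc ^ k‖ ≤ (r : ℝ) ^ k := by
    intro k hk
    have h1 := hK0 k (le_trans (le_max_left _ _) hk)
    have hk1 : (1:ℕ) ≤ k := le_trans (le_max_right _ _) hk
    have hkne : ((k : ℝ)) ≠ 0 := by positivity
    have h2 := ENNReal.rpow_lt_rpow h1 (show (0:ℝ) < (k:ℝ) by positivity)
    rw [← ENNReal.rpow_mul, one_div, inv_mul_cancel₀ hkne, ENNReal.rpow_one,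
      ENNReal.rpow_natCast] at h2
    have h3 : ‖Mc ^ k‖₊ ≤ r ^ k := by
      have := h2.le
      rw [← ENNReal.coe_pow] at this
      exact_mod_cast this
    calc ‖Mc ^ k‖ = ((‖Mc ^ k‖₊ : ℝ)) := rfl
      _ ≤ ((r ^ k : NNReal) : ℝ) := by exact_mod_cast h3
      _ = (r : ℝ) ^ k := by push_cast; rfl
  set c0 : ℝ := ∑ j ∈ Finset.range K1, ‖Mc ^ j‖ / (r : ℝ) ^ j with hc0def
  have hc00 : 0 ≤ c0 := Finset.sum_nonneg fun j _ => by positivity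
  refine ⟨c0 + 1, r, by linarith, hr0, hr1, ?_⟩
  intro k i j
  have hentry : |(M ^ k) i j| ≤ ‖Mc ^ k‖ := by
    have hone : ‖(Pi.single j 1 : Fin q → ℂ)‖ ≤ 1 := by
      refine pi_norm_le_iff_of_nonneg (by norm_num) |>.mpr fun i' => ?_
      rcases eq_or_ne i' j with h | h <;> simp [Pi.single_apply, h]
    have happ : ((Mc ^ k).mulVec (Pi.single j 1)) i = ((M ^ k) i j : ℂ) := by
      rw [map_pow_ofReal]
      simp [Matrix.mulVec_single, Matrix.map_apply]
    calc |(M ^ k) i j| = ‖(((M ^ k) i j : ℝ) : ℂ)‖ := by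
          rw [Complex.norm_real, Real.norm_eq_abs]
      _ = ‖((Mc ^ k).mulVec (Pi.single j 1)) i‖ := by rw [happ]
      _ ≤ ‖(Mc ^ k).mulVec (Pi.single j 1)‖ := norm_le_pi_norm _ i
      _ ≤ ‖Mc ^ k‖ * ‖(Pi.single j 1 : Fin q → ℂ)‖ := Matrix.linfty_opNorm_mulVec _ _
      _ ≤ ‖Mc ^ k‖ * 1 := by
          exact mul_le_mul_of_nonneg_left hone (norm_nonneg _)
      _ = ‖Mc ^ k‖ := mul_one _
  have hrk : (0:ℝ) < (r:ℝ) ^ k := pow_pos hr0 k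
  by_cases hk : K1 ≤ k
  · have := hnorm k hk
    nlinarith
  · push_neg at hk
    have hmem : k ∈ Finset.range K1 := Finset.mem_range.mpr hk
    have hterm : ‖Mc ^ k‖ / (r:ℝ) ^ k ≤ c0 :=
      Finset.single_le_sum (f := fun j => ‖Mc ^ j‖ / (r:ℝ) ^ j)
        (fun j _ => by positivity) hmem
    have : ‖Mc ^ k‖ ≤ c0 * (r:ℝ) ^ k := by
      rw [div_le_iff₀ hrk] at hterm; linarith
    nlinarith


lemma semistable_entry_bound {q : ℕ} (M : Matrix (Fin q) (Fin q) ℝ)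
    (hM : ∀ μ : ℂ, (∃ x : Fin q → ℂ, x ≠ 0 ∧
        (M.map Complex.ofReal).mulVec x = μ • x) → ‖μ‖ ≤ 1)
    {ρ : ℝ} (hρ : 1 < ρ) :
    ∃ c : ℝ, 0 < c ∧ ∀ k i j, |(M ^ k) i j| ≤ c * ρ ^ k := by
  have hρ0 : (0:ℝ) < ρ := by linarith
  have hyp : ∀ μ : ℂ, (∃ x : Fin q → ℂ, x ≠ 0 ∧
      ((ρ⁻¹ • M).map Complex.ofReal).mulVec x = μ • x) → ‖μ‖ < 1 := by
    rintro μ ⟨x, hx, hmul⟩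
    have hmap : (ρ⁻¹ • M).map Complex.ofReal =
        (ρ⁻¹ : ℂ) • (M.map Complex.ofReal) := by
      ext i j
      simp [Matrix.map_apply, Matrix.smul_apply, smul_eq_mul, Complex.ofReal_mul]
    rw [hmap, Matrix.smul_mulVec] at hmul
    have hmul2 : (M.map Complex.ofReal).mulVec x = ((ρ:ℂ) * μ) • x := by
      have h := congrArg (fun y => (ρ:ℂ) • y) hmul
      simp only [smul_smul] at h
      rw [show ((ρ:ℂ) * ((ρ:ℂ))⁻¹) = 1 from
        mul_inv_cancel₀ (by exact_mod_cast hρ0.ne'), one_smul] at h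
      rw [h]
    have hle := hM ((ρ:ℂ) * μ) ⟨x, hx, hmul2⟩
    rw [norm_mul, Complex.norm_real, Real.norm_eq_abs, abs_of_pos hρ0] at hle
    calc ‖μ‖ = ρ⁻¹ * (ρ * ‖μ‖) := by field_simp
      _ ≤ ρ⁻¹ * 1 := mul_le_mul_of_nonneg_left hle (by positivity)
      _ < 1 := by rw [mul_one]; exact inv_lt_one_of_one_lt₀ hρ
  obtain ⟨c, r, hc, hr0, hr1, hb⟩ := schur_entry_bound (ρ⁻¹ • M) hyp
  refine ⟨c, hc, fun k i j => ?_⟩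
  have h1 := hb k i j
  have h2 : ((ρ⁻¹ • M) ^ k) i j = ρ⁻¹ ^ k * (M ^ k) i j := by
    rw [smul_pow]; simp [Matrix.smul_apply, smul_eq_mul]
  rw [h2, abs_mul, abs_pow, abs_of_pos (inv_pos.mpr hρ0)] at h1
  have hinv : ρ⁻¹ ^ k * ρ ^ k = 1 := by
    rw [← mul_pow, inv_mul_cancel₀ (ne_of_gt hρ0), one_pow]
  have h4 : (ρ⁻¹ ^ k * |(M ^ k) i j|) * ρ ^ k ≤ (c * r ^ k) * ρ ^ k :=
    mul_le_mul_of_nonneg_right h1 (pow_nonneg hρ0.le k)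
  have h5 : (ρ⁻¹ ^ k * |(M ^ k) i j|) * ρ ^ k = |(M ^ k) i j| := by
    rw [mul_comm (ρ⁻¹ ^ k) _, mul_assoc, hinv, mul_one]
  rw [h5] at h4
  have h6 : c * r ^ k * ρ ^ k = c * (r * ρ) ^ k := by rw [mul_pow]; ring
  rw [h6] at h4
  exact h4.trans (mul_le_mul_of_nonneg_left
    (pow_le_pow_left₀ (by positivity) (by nlinarith) k) hc.le)

lemma entry_mulVec_bound {ι κ : Type*} [Fintype ι] [Fintype κ] (P : Matrix κ ι ℝ) {b : ℝ}
    (hb : 0 ≤ b) (h : ∀ i j, |P i j| ≤ b) (v : ι → ℝ) :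
    ‖P.mulVec v‖ ≤ (Fintype.card ι * b) * ‖v‖ := by
  refine pi_norm_le_iff_of_nonneg (by positivity) |>.mpr fun i => ?_
  have : P.mulVec v i = ∑ j, P i j * v j := rfl
  rw [Real.norm_eq_abs, this]
  calc |∑ j, P i j * v j| ≤ ∑ j, |P i j * v j| := Finset.abs_sum_le_sum_abs _ _
    _ ≤ ∑ _j : ι, b * ‖v‖ := Finset.sum_le_sum fun j _ => by
        rw [abs_mul]
        have hv : |v j| ≤ ‖v‖ := by
          rw [← Real.norm_eq_abs]; exact norm_le_pi_norm v j
        exact mul_le_mul (h i j) hv (abs_nonneg _) hb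
    _ = Fintype.card ι * b * ‖v‖ := by
        rw [Finset.sum_const, Finset.card_univ, nsmul_eq_mul]; ring

lemma geom_sum_le_inv {r : ℝ} (hr0 : 0 ≤ r) (hr1 : r < 1) (k : ℕ) :
    ∑ i ∈ Finset.range k, r ^ i ≤ 1 / (1 - r) := by
  have h1r : 0 < 1 - r := by linarith
  rcases eq_or_ne r 1 with h | h
  · exfalso; linarith
  · rw [geom_sum_eq h, show (r ^ k - 1)/(r - 1) = (1 - r ^ k)/(1 - r) from by
      rw [div_eq_div_iff (by linarith) (by linarith)]; ring]
    have : (0:ℝ) ≤ r ^ k := pow_nonneg hr0 k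
    gcongr
    linarith

lemma conv_tendsto {r : ℝ} (hr0 : 0 < r) (hr1 : r < 1) {a : ℕ → ℝ}
    (ha0 : ∀ j, 0 ≤ a j) (ha : Filter.Tendsto a Filter.atTop (nhds 0)) :
    Filter.Tendsto (fun k => ∑ j ∈ Finset.range k, r ^ (k - 1 - j) * a j)
      Filter.atTop (nhds 0) := by
  have h1r : (0:ℝ) < 1 - r := by linarith
  rw [NormedAddCommGroup.tendsto_nhds_zero]
  intro ε hε
  set ε' := ε * (1 - r) / 2 with hε'def
  have hε'0 : 0 < ε' := by positivity
  obtain ⟨J, hJ⟩ := Metric.tendsto_atTop.mp ha ε' hε'0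
  have haJ : ∀ j, J ≤ j → a j ≤ ε' := by
    intro j hj
    have := hJ j hj
    rw [Real.dist_eq, sub_zero] at this
    exact le_of_lt (lt_of_le_of_lt (le_abs_self _) this)
  set T0 : ℝ := ∑ j ∈ Finset.range J, r ^ (J - 1 - j) * a j with hT0def
  have hT00 : 0 ≤ T0 := Finset.sum_nonneg fun j _ => by
    have := ha0 j; positivity
  have hhead : Filter.Tendsto (fun k : ℕ => r ^ (k - J) * T0)
      Filter.atTop (nhds 0) := by
    have h1 : Filter.Tendsto (fun k : ℕ => r ^ (k - J)) Filter.atTop (nhds 0) :=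
      (tendsto_pow_atTop_nhds_zero_of_lt_one hr0.le hr1).comp
        (Filter.tendsto_sub_atTop_nat J)
    simpa using h1.mul_const T0
  have hheadev : ∀ᶠ k : ℕ in Filter.atTop, r ^ (k - J) * T0 < ε / 2 := by
    refine hhead.eventually_lt_const (by positivity)
  filter_upwards [hheadev, Filter.eventually_ge_atTop J] with k hk1 hk2
  -- split the sum
  have hsplit : ∑ j ∈ Finset.range k, r ^ (k - 1 - j) * a j =
      (∑ j ∈ Finset.range J, r ^ (k - 1 - j) * a j) +
      ∑ j ∈ Finset.Ico J k, r ^ (k - 1 - j) * a j := by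
    simp only [Finset.range_eq_Ico]
    rw [← Finset.sum_Ico_consecutive _ (Nat.zero_le J) hk2]
  have hheadeq : ∑ j ∈ Finset.range J, r ^ (k - 1 - j) * a j = r ^ (k - J) * T0 := by
    rw [hT0def, Finset.mul_sum]
    refine Finset.sum_congr rfl fun j hj => ?_
    have hjJ : j < J := Finset.mem_range.mp hj
    have : k - 1 - j = (k - J) + (J - 1 - j) := by omega
    rw [this, pow_add, mul_assoc]
  have htail : ∑ j ∈ Finset.Ico J k, r ^ (k - 1 - j) * a j ≤ ε / 2 := by
    have h1 : ∑ j ∈ Finset.Ico J k, r ^ (k - 1 - j) * a j ≤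
        ∑ j ∈ Finset.Ico J k, r ^ (k - 1 - j) * ε' := by
      refine Finset.sum_le_sum fun j hj => ?_
      have hjJ : J ≤ j := (Finset.mem_Ico.mp hj).1
      exact mul_le_mul_of_nonneg_left (haJ j hjJ) (by positivity)
    have h2 : ∑ j ∈ Finset.Ico J k, r ^ (k - 1 - j) * ε' ≤
        ∑ j ∈ Finset.range k, r ^ (k - 1 - j) * ε' := by
      refine Finset.sum_le_sum_of_subset_of_nonneg ?_ fun j _ _ => by positivity
      intro j hj
      exact Finset.mem_range.mpr (Finset.mem_Ico.mp hj).2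
    have h3 : ∑ j ∈ Finset.range k, r ^ (k - 1 - j) * ε' =
        (∑ i ∈ Finset.range k, r ^ i) * ε' := by
      rw [← Finset.sum_mul]
      congr 1
      exact Finset.sum_range_reflect (fun i => r ^ i) k
    have h4 : (∑ i ∈ Finset.range k, r ^ i) * ε' ≤ (1 / (1 - r)) * ε' :=
      mul_le_mul_of_nonneg_right (geom_sum_le_inv hr0.le hr1 k) hε'0.le
    have h5 : (1 / (1 - r)) * ε' = ε / 2 := by
      rw [hε'def]; field_simp
    linarith
  have hnn : 0 ≤ ∑ j ∈ Finset.range k, r ^ (k - 1 - j) * a j :=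
    Finset.sum_nonneg fun j _ => by have := ha0 j; positivity
  rw [Real.norm_eq_abs, abs_of_nonneg hnn, hsplit, hheadeq]
  linarith

lemma mulVec_finsum {ι κ : Type*} [Fintype ι] [Fintype κ] (M : Matrix κ ι ℝ)
    {β : Type*} (s : Finset β) (f : β → ι → ℝ) :
    M.mulVec (∑ j ∈ s, f j) = ∑ j ∈ s, M.mulVec (f j) := by
  simp only [← Matrix.mulVecLin_apply]
  exact map_sum (Matrix.mulVecLin M) f s

lemma driven {ι : Type*} [Fintype ι] [DecidableEq ι] (M : Matrix ι ι ℝ) {c r : ℝ}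
    (hr0 : 0 < r) (hr1 : r < 1)
    (hb : ∀ (k : ℕ) (v : ι → ℝ), ‖(M ^ k).mulVec v‖ ≤ c * r ^ k * ‖v‖)
    (z u : ℕ → ι → ℝ) (hz : ∀ k, z (k + 1) = M.mulVec (z k) + u k)
    (hu : Filter.Tendsto u Filter.atTop (nhds 0)) :
    Filter.Tendsto z Filter.atTop (nhds 0) := by
  have hb' : ∀ (k : ℕ) (v : ι → ℝ), ‖(M ^ k).mulVec v‖ ≤ |c| * r ^ k * ‖v‖ := by
    intro k v
    refine (hb k v).trans ?_
    have : (0:ℝ) ≤ r ^ k * ‖v‖ := by positivity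
    have hc : c ≤ |c| := le_abs_self c
    calc c * r ^ k * ‖v‖ = c * (r ^ k * ‖v‖) := by ring
      _ ≤ |c| * (r ^ k * ‖v‖) := mul_le_mul_of_nonneg_right hc this
      _ = |c| * r ^ k * ‖v‖ := by ring
  have hrep : ∀ k, z k = (M ^ k).mulVec (z 0) +
      ∑ j ∈ Finset.range k, (M ^ (k - 1 - j)).mulVec (u j) := by
    intro k
    induction k with
    | zero => simp [Matrix.one_mulVec]
    | succ k ih =>
        rw [hz k, ih, Matrix.mulVec_add, Matrix.mulVec_mulVec, ← pow_succ',
          add_assoc]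
        congr 1
        rw [mulVec_finsum, Finset.sum_range_succ]
        congr 1
        · refine Finset.sum_congr rfl fun j hj => ?_
          have hj' : j < k := Finset.mem_range.mp hj
          rw [Matrix.mulVec_mulVec, ← pow_succ']
          have he : k - 1 - j + 1 = k + 1 - 1 - j := by omega
          rw [he]
        · have he : k + 1 - 1 - k = 0 := by omega
          rw [he, pow_zero, Matrix.one_mulVec]
  have hbound : ∀ k, ‖z k‖ ≤ |c| * r ^ k * ‖z 0‖ +
      ∑ j ∈ Finset.range k, |c| * r ^ (k - 1 - j) * ‖u j‖ := by
    intro k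
    rw [hrep k]
    refine (norm_add_le _ _).trans (add_le_add (hb' k (z 0)) ?_)
    refine (norm_sum_le _ _).trans ?_
    exact Finset.sum_le_sum fun j _ => hb' _ _
  have h1 : Filter.Tendsto (fun k : ℕ => |c| * r ^ k * ‖z 0‖)
      Filter.atTop (nhds 0) := by
    have h := (tendsto_pow_atTop_nhds_zero_of_lt_one hr0.le hr1).const_mul |c|
    simpa [mul_assoc] using h.mul_const ‖z 0‖
  have h2 : Filter.Tendsto
      (fun k : ℕ => ∑ j ∈ Finset.range k, |c| * r ^ (k - 1 - j) * ‖u j‖)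
      Filter.atTop (nhds 0) := by
    have hun : Filter.Tendsto (fun j => ‖u j‖) Filter.atTop (nhds 0) := by
      simpa using hu.norm
    have h := (conv_tendsto hr0 hr1 (a := fun j => ‖u j‖)
      (fun j => norm_nonneg _) hun).const_mul |c|
    simp only [Finset.mul_sum] at h
    simpa [mul_assoc] using h
  exact squeeze_zero_norm hbound (by simpa using h1.add h2)

lemma schur_mulVec_bound {q : ℕ} (M : Matrix (Fin q) (Fin q) ℝ)
    (hM : ∀ μ : ℂ, (∃ x : Fin q → ℂ, x ≠ 0 ∧
        (M.map Complex.ofReal).mulVec x = μ • x) → ‖μ‖ < 1) :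
    ∃ c r : ℝ, 0 < r ∧ r < 1 ∧
      ∀ (k : ℕ) (v : Fin q → ℝ), ‖(M ^ k).mulVec v‖ ≤ c * r ^ k * ‖v‖ := by
  obtain ⟨c, r, hc, hr0, hr1, hb⟩ := schur_entry_bound M hM
  refine ⟨q * c, r, hr0, hr1, fun k v => ?_⟩
  calc ‖(M ^ k).mulVec v‖ ≤ (Fintype.card (Fin q) * (c * r ^ k)) * ‖v‖ :=
        entry_mulVec_bound (M ^ k) (by positivity) (fun i j => hb k i j) v
    _ = (q * c) * r ^ k * ‖v‖ := by rw [Fintype.card_fin]; ring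

lemma tendsto_mulVec_zero {ι κ : Type*} [Fintype ι] [Fintype κ] (P : Matrix κ ι ℝ)
    {w : ℕ → ι → ℝ} (hw : Filter.Tendsto w Filter.atTop (nhds 0)) :
    Filter.Tendsto (fun k => P.mulVec (w k)) Filter.atTop (nhds 0) := by
  classical
  set b : ℝ := ∑ i, ∑ j, |P i j| with hbdef
  have hbnn : 0 ≤ b :=
    Finset.sum_nonneg fun i _ => Finset.sum_nonneg fun j _ => abs_nonneg _
  have hPb : ∀ i j, |P i j| ≤ b := by
    intro i j
    calc |P i j| ≤ ∑ j', |P i j'| :=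
          Finset.single_le_sum (f := fun j' => |P i j'|)
            (fun _ _ => abs_nonneg _) (Finset.mem_univ j)
      _ ≤ b := Finset.single_le_sum (f := fun i => ∑ j', |P i j'|)
          (fun _ _ => Finset.sum_nonneg fun _ _ => abs_nonneg _) (Finset.mem_univ i)
  have hnorm : ∀ k, ‖P.mulVec (w k)‖ ≤ (Fintype.card ι * b) * ‖w k‖ := fun k =>
    entry_mulVec_bound P hbnn hPb (w k)
  have ht : Filter.Tendsto (fun k => (Fintype.card ι * b) * ‖w k‖)
      Filter.atTop (nhds 0) := by
    have := hw.norm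
    simpa using this.const_mul ((Fintype.card ι : ℝ) * b)
  exact squeeze_zero_norm hnorm ht

open Kronecker in
lemma kron_pow {N n : ℕ} (D : Matrix (Fin N) (Fin N) ℝ) (A : Matrix (Fin n) (Fin n) ℝ)
    (k : ℕ) : (D ⊗ₖ A) ^ k = (D ^ k) ⊗ₖ (A ^ k) := by
  induction k with
  | zero => simp [Matrix.one_kronecker_one]
  | succ k ih => rw [pow_succ, pow_succ, pow_succ, ih, Matrix.mul_kronecker_mul]



set_option maxHeartbeats 1000000 in
theorem regulated_output_synchronization_homogenized
    (n m p : ℕ)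
    (A : Matrix (Fin n) (Fin n) ℝ) (B : Matrix (Fin n) (Fin m) ℝ)
    (C : Matrix (Fin p) (Fin n) ℝ)
    (K : Matrix (Fin m) (Fin n) ℝ) (H : Matrix (Fin n) (Fin p) ℝ)
    (hA : ∀ μ : ℂ, (∃ x : Fin n → ℂ, x ≠ 0 ∧
        (A.map Complex.ofReal).mulVec x = μ • x) → ‖μ‖ ≤ 1)
    (hABK : ∀ μ : ℂ, (∃ x : Fin n → ℂ, x ≠ 0 ∧
        ((A - B * K).map Complex.ofReal).mulVec x = μ • x) → ‖μ‖ < 1)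
    (hAHC : ∀ μ : ℂ, (∃ x : Fin n → ℂ, x ≠ 0 ∧
        ((A - H * C).map Complex.ofReal).mulVec x = μ • x) → ‖μ‖ < 1)
    (N : ℕ) (hN : 1 ≤ N)
    (Db : Matrix (Fin N) (Fin N) ℝ)
    (hDb : ∀ μ : ℂ, (∃ x : Fin N → ℂ, x ≠ 0 ∧
        (Db.map Complex.ofReal).mulVec x = μ • x) → ‖μ‖ < 1)
    -- exosystem
    (xr : ℕ → Fin n → ℝ)
    (hxr : ∀ k, xr (k + 1) = A.mulVec (xr k))
    -- disturbance generators
    (s : Fin N → ℕ)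
    (As : ∀ i : Fin N, Matrix (Fin (s i)) (Fin (s i)) ℝ)
    (Cs : ∀ i : Fin N, Matrix (Fin m) (Fin (s i)) ℝ)
    (hAs : ∀ i : Fin N, ∀ μ : ℂ, (∃ x : Fin (s i) → ℂ, x ≠ 0 ∧
        ((As i).map Complex.ofReal).mulVec x = μ • x) → ‖μ‖ < 1)
    (ω : (i : Fin N) → ℕ → Fin (s i) → ℝ)
    (hω : ∀ i k, ω i (k + 1) = (As i).mulVec (ω i k))
    (d : Fin N → ℕ → Fin m → ℝ)
    (hd : ∀ i k, d i k = (Cs i).mulVec (ω i k))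
    -- closed-loop dynamics
    (x η xh : Fin N → ℕ → Fin n → ℝ)
    (hx : ∀ i k, x i (k + 1) =
        A.mulVec (x i k) + B.mulVec (-(K.mulVec (η i k)) + d i k))
    (hη : ∀ i k, η i (k + 1) =
        A.mulVec (η i k) + B.mulVec (-(K.mulVec (η i k)))
          + A.mulVec (xh i k)
          - A.mulVec (η i k - ∑ j, Db i j • η j k))
    (hxh : ∀ i k, xh i (k + 1) =
        A.mulVec (xh i k)
          + H.mulVec ((C.mulVec (x i k) - C.mulVec (xr k)
              - ∑ j, Db i j • (C.mulVec (x j k) - C.mulVec (xr k)))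
              - C.mulVec (xh i k))
          - (B * K).mulVec (η i k - ∑ j, Db i j • η j k)) :
    (∀ i, Filter.Tendsto (fun k => x i k - xr k) Filter.atTop (nhds 0)) ∧
    (∀ i, Filter.Tendsto (fun k => C.mulVec (x i k) - C.mulVec (xr k))
        Filter.atTop (nhds 0)) := by
  classical
  -- disturbances tend to zero
  have hω0 : ∀ i, Filter.Tendsto (ω i) Filter.atTop (nhds 0) := by
    intro i
    obtain ⟨c, r, hr0, hr1, hb⟩ := schur_mulVec_bound (As i) (hAs i)
    exact driven (As i) hr0 hr1 hb (ω i) (fun _ => 0)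
      (fun k => by simp [hω i k]) tendsto_const_nhds
  have hd0 : ∀ i, Filter.Tendsto (fun k => d i k) Filter.atTop (nhds 0) := by
    intro i
    exact (tendsto_mulVec_zero (Cs i) (hω0 i)).congr fun k => (hd i k).symm
  -- observer-error recurrence (δ)
  have hδrec : ∀ i k,
      ((x i (k+1) - xr (k+1)) - (∑ j, Db i j • (x j (k+1) - xr (k+1))) - xh i (k+1))
        = (A - H * C).mulVec
            ((x i k - xr k) - (∑ j, Db i j • (x j k - xr k)) - xh i k)
          + (B.mulVec (d i k) - ∑ j, Db i j • B.mulVec (d j k)) := by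
    intro i k
    simp only [hx, hη, hxh, hxr, Matrix.sub_mulVec, Matrix.mulVec_add,
      Matrix.mulVec_sub, Matrix.mulVec_neg, Matrix.mulVec_smul, mulVec_finsum,
      ← Matrix.mulVec_mulVec, smul_add, smul_sub, smul_neg,
      Finset.sum_add_distrib, Finset.sum_sub_distrib, Finset.sum_neg_distrib]
    abel
  have hδ0 : ∀ i, Filter.Tendsto
      (fun k => (x i k - xr k) - (∑ j, Db i j • (x j k - xr k)) - xh i k)
      Filter.atTop (nhds 0) := by
    intro i
    obtain ⟨c, r, hr0, hr1, hb⟩ := schur_mulVec_bound (A - H * C) hAHC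
    refine driven (A - H * C) hr0 hr1 hb _ _ (fun k => hδrec i k) ?_
    have h1 := tendsto_mulVec_zero B (hd0 i)
    have h2 : Filter.Tendsto (fun k => ∑ j, Db i j • B.mulVec (d j k))
        Filter.atTop (nhds 0) := by
      have := tendsto_finset_sum (Finset.univ)
        (fun j (_ : j ∈ Finset.univ) =>
          (tendsto_mulVec_zero B (hd0 j)).const_smul (Db i j))
      simpa using this
    simpa using h1.sub h2
  -- synchronization-error recurrence (ψ)
  have hψrec : ∀ i k,
      (x i (k+1) - xr (k+1) - η i (k+1))
        = (∑ j, Db i j • A.mulVec (x j k - xr k - η j k))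
          + (B.mulVec (d i k) + A.mulVec
              ((x i k - xr k) - (∑ j, Db i j • (x j k - xr k)) - xh i k)) := by
    intro i k
    simp only [hx, hη, hxh, hxr, Matrix.sub_mulVec, Matrix.mulVec_add,
      Matrix.mulVec_sub, Matrix.mulVec_neg, Matrix.mulVec_smul, mulVec_finsum,
      ← Matrix.mulVec_mulVec, smul_add, smul_sub, smul_neg,
      Finset.sum_add_distrib, Finset.sum_sub_distrib, Finset.sum_neg_distrib]
    abel
  -- stacked ψ system
  set Mψ : Matrix (Fin N × Fin n) (Fin N × Fin n) ℝ :=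
    Matrix.kroneckerMap (· * ·) Db A with hMψdef
  have hψb : ∃ c r : ℝ, 0 < r ∧ r < 1 ∧
      ∀ (k : ℕ) (v : (Fin N × Fin n) → ℝ),
        ‖(Mψ ^ k).mulVec v‖ ≤ c * r ^ k * ‖v‖ := by
    obtain ⟨c1, r1, hc1, hr10, hr11, hb1⟩ := schur_entry_bound Db hDb
    set ρ : ℝ := 2 / (1 + r1) with hρdef
    have hden : (0:ℝ) < 1 + r1 := by linarith
    have hρ1 : 1 < ρ := by
      rw [hρdef, lt_div_iff₀ hden]; linarith
    obtain ⟨c2, hc2, hb2⟩ := semistable_entry_bound A hA hρ1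
    set r := r1 * ρ with hrdef
    have hρ0 : 0 < ρ := by linarith
    have hr0 : 0 < r := by rw [hrdef]; positivity
    have hr1' : r < 1 := by
      have : r = r1 * 2 / (1 + r1) := by rw [hrdef, hρdef]; ring
      rw [this, div_lt_one hden]; linarith
    have hentry : ∀ (k : ℕ) (pq qq : Fin N × Fin n),
        |(Mψ ^ k) pq qq| ≤ (c1 * c2) * r ^ k := by
      intro k pq qq
      rw [hMψdef, kron_pow]
      show |(Db ^ k) pq.1 qq.1 * (A ^ k) pq.2 qq.2| ≤ (c1 * c2) * r ^ k
      rw [abs_mul]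
      calc |(Db ^ k) pq.1 qq.1| * |(A ^ k) pq.2 qq.2|
          ≤ (c1 * r1 ^ k) * (c2 * ρ ^ k) :=
            mul_le_mul (hb1 k _ _) (hb2 k _ _) (abs_nonneg _) (by positivity)
        _ = (c1 * c2) * r ^ k := by rw [hrdef, mul_pow]; ring
    refine ⟨(Fintype.card (Fin N × Fin n) : ℝ) * (c1 * c2), r, hr0, hr1',
      fun k v => ?_⟩
    calc ‖(Mψ ^ k).mulVec v‖
        ≤ ((Fintype.card (Fin N × Fin n) : ℝ) * ((c1 * c2) * r ^ k)) * ‖v‖ :=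
          entry_mulVec_bound _ (by positivity) (fun i j => hentry k i j) v
      _ = ((Fintype.card (Fin N × Fin n) : ℝ) * (c1 * c2)) * r ^ k * ‖v‖ := by ring
  obtain ⟨cψ, rψ, hrψ0, hrψ1, hbψ⟩ := hψb
  set Z : ℕ → (Fin N × Fin n) → ℝ :=
    fun k pq => (x pq.1 k - xr k - η pq.1 k) pq.2 with hZdef
  set U : ℕ → (Fin N × Fin n) → ℝ := fun k pq =>
    (B.mulVec (d pq.1 k) + A.mulVec
      ((x pq.1 k - xr k) - (∑ j, Db pq.1 j • (x j k - xr k)) - xh pq.1 k)) pq.2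
    with hUdef
  have hZrec : ∀ k, Z (k+1) = Mψ.mulVec (Z k) + U k := by
    intro k
    funext pq
    have hcomp := congrFun (hψrec pq.1 k) pq.2
    show (x pq.1 (k+1) - xr (k+1) - η pq.1 (k+1)) pq.2 = _
    rw [hcomp]
    simp only [Pi.add_apply]
    congr 1
    rw [hMψdef]
    simp only [Matrix.mulVec, dotProduct, Matrix.kroneckerMap_apply,
      Fintype.sum_prod_type, Finset.sum_apply, Pi.smul_apply, smul_eq_mul,
      Finset.mul_sum, mul_assoc, hZdef]
  have hU0 : Filter.Tendsto U Filter.atTop (nhds 0) := by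
    rw [tendsto_pi_nhds]
    intro pq
    have h1 := (tendsto_mulVec_zero B (hd0 pq.1)).add
      (tendsto_mulVec_zero A (hδ0 pq.1))
    have h1' : Filter.Tendsto (fun k => B.mulVec (d pq.1 k) + A.mulVec
        ((x pq.1 k - xr k) - (∑ j, Db pq.1 j • (x j k - xr k)) - xh pq.1 k))
        Filter.atTop (nhds 0) := by simpa using h1
    have h2 := tendsto_pi_nhds.mp h1' pq.2
    simpa [hUdef] using h2
  have hZ0 : Filter.Tendsto Z Filter.atTop (nhds 0) :=
    driven Mψ hrψ0 hrψ1 hbψ Z U hZrec hU0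
  have hψ0 : ∀ i, Filter.Tendsto (fun k => x i k - xr k - η i k)
      Filter.atTop (nhds 0) := by
    intro i
    rw [tendsto_pi_nhds]
    intro a
    have := tendsto_pi_nhds.mp hZ0 (i, a)
    simpa [hZdef] using this
  -- protocol-state recurrence (η)
  have hηrec : ∀ i k, η i (k+1)
      = (A - B * K).mulVec (η i k) + A.mulVec
          ((x i k - xr k - η i k) - (∑ j, Db i j • (x j k - xr k - η j k))
            - ((x i k - xr k) - (∑ j, Db i j • (x j k - xr k)) - xh i k)) := by
    intro i k
    simp only [hη, Matrix.sub_mulVec, Matrix.mulVec_add,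
      Matrix.mulVec_sub, Matrix.mulVec_neg, Matrix.mulVec_smul, mulVec_finsum,
      ← Matrix.mulVec_mulVec, smul_add, smul_sub, smul_neg,
      Finset.sum_add_distrib, Finset.sum_sub_distrib, Finset.sum_neg_distrib]
    abel
  have hη0 : ∀ i, Filter.Tendsto (η i) Filter.atTop (nhds 0) := by
    intro i
    obtain ⟨c, r, hr0, hr1, hb⟩ := schur_mulVec_bound (A - B * K) hABK
    refine driven (A - B * K) hr0 hr1 hb _ _ (fun k => hηrec i k) ?_
    have hsum : Filter.Tendsto
        (fun k => ∑ j, Db i j • (x j k - xr k - η j k))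
        Filter.atTop (nhds 0) := by
      have := tendsto_finset_sum (Finset.univ)
        (fun j (_ : j ∈ Finset.univ) => (hψ0 j).const_smul (Db i j))
      simpa using this
    have hin := ((hψ0 i).sub hsum).sub (hδ0 i)
    have := tendsto_mulVec_zero A (by simpa using hin)
    simpa using this
  have hmain : ∀ i, Filter.Tendsto (fun k => x i k - xr k)
      Filter.atTop (nhds 0) := by
    intro i
    have h := (hψ0 i).add (hη0 i)
    rw [add_zero] at h
    exact h.congr fun k => by abel
  refine ⟨hmain, fun i => ?_⟩
  have h := tendsto_mulVec_zero C (hmain i)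
  exact h.congr fun k => Matrix.mulVec_sub C _ _
end

section
/- Let A ∈ ℝ^{n×n}, B ∈ ℝ^{n×m}, C ∈ ℝ^{p×n}, K ∈ ℝ^{m×n}, H ∈ ℝ^{n×p}, N ≥ 1, and D̄ = [d̄_ij] ∈ ℝ^{N×N}. Let x_r : ℕ → ℝⁿ satisfy x_r(k+1) = A x_r(k). Suppose sequences x_i, η_i, x̂_i : ℕ → ℝⁿ and d_i : ℕ → ℝ^m (i = 1,…,N) satisfy x_i(k+1) = A x_i(k) + B(−K η_i(k) + d_i(k)), η_i(k+1) = A η_i(k) − BK η_i(k) + A x̂_i(k) − A ζ̌_i(k), x̂_i(k+1) = A x̂_i(k) + H(ζ̄_i(k) − C x̂_i(k)) − BK ζ̌_i(k), where ζ̄_i(k) = C(x_i(k) − x_r(k)) − Σ_{j=1}^N d̄_ij C(x_j(k) − x_r(k)) and ζ̌_i(k) = η_i(k) − Σ_{j=1}^N d̄_ij η_j(k). Define the stacked vectors x̃ = (x_1 − x_r, …, x_N − x_r), x̂ = (x̂_1, …, x̂_N), d = (d_1,…,d_N), and set ẽ(k) = (x̃(k) − x̂(k)) − (D̄ ⊗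 I_n) x̃(k). Then for all k ∈ ℕ, ẽ(k+1) = (I_N ⊗ (A − HC)) ẽ(k) + ((I_N − D̄) ⊗ B) d(k). -/
open Kronecker

lemma mv_sum {α : Type*} [Fintype α] {n' m' : ℕ} (M : Matrix (Fin n') (Fin m') ℝ)
    (f : α → Fin m' → ℝ) :
    M.mulVec (∑ j, f j) = ∑ j, M.mulVec (f j) := by
  ext a
  simp [Matrix.mulVec, dotProduct, Finset.mul_sum]
  exact Finset.sum_comm

lemma kmv {N' n' m' : ℕ} (M : Matrix (Fin N') (Fin N') ℝ) (P : Matrix (Fin n') (Fin m') ℝ)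
    (v : Fin N' × Fin m' → ℝ) (i : Fin N') (a : Fin n') :
    (M ⊗ₖ P).mulVec v (i, a) = ∑ j, M i j • P.mulVec (fun b => v (j, b)) a := by
  simp [Matrix.mulVec, dotProduct, Fintype.sum_prod_type, Finset.mul_sum, mul_assoc]

theorem regulated_error_identity
    (n m p N : ℕ) (hN : 1 ≤ N)
    (A : Matrix (Fin n) (Fin n) ℝ) (B : Matrix (Fin n) (Fin m) ℝ)
    (C : Matrix (Fin p) (Fin n) ℝ)
    (K : Matrix (Fin m) (Fin n) ℝ) (H : Matrix (Fin n) (Fin p) ℝ)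
    (Db : Matrix (Fin N) (Fin N) ℝ)
    (xr : ℕ → Fin n → ℝ)
    (hxr : ∀ k, xr (k + 1) = A.mulVec (xr k))
    (x η xh : Fin N → ℕ → Fin n → ℝ)
    (d : Fin N → ℕ → Fin m → ℝ)
    (hx : ∀ i k, x i (k + 1) =
        A.mulVec (x i k) + B.mulVec (-(K.mulVec (η i k)) + d i k))
    (hη : ∀ i k, η i (k + 1) =
        A.mulVec (η i k) - (B * K).mulVec (η i k)
          + A.mulVec (xh i k)
          - A.mulVec (η i k - ∑ j, Db i j • η j k))
    (hxh : ∀ i k, xh i (k + 1) =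
        A.mulVec (xh i k)
          + H.mulVec ((C.mulVec (x i k - xr k)
              - ∑ j, Db i j • C.mulVec (x j k - xr k))
              - C.mulVec (xh i k))
          - (B * K).mulVec (η i k - ∑ j, Db i j • η j k))
    (xt : ℕ → Fin N × Fin n → ℝ)
    (hxt : ∀ k q, xt k q = x q.1 k q.2 - xr k q.2)
    (xhs : ℕ → Fin N × Fin n → ℝ)
    (hxhs : ∀ k q, xhs k q = xh q.1 k q.2)
    (ds : ℕ → Fin N × Fin m → ℝ)
    (hds : ∀ k q, ds k q = d q.1 k q.2)
    (et : ℕ → Fin N × Fin n → ℝ)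
    (het : ∀ k, et k = (xt k - xhs k)
        - (Db ⊗ₖ (1 : Matrix (Fin n) (Fin n) ℝ)).mulVec (xt k)) :
    ∀ k, et (k + 1)
        = ((1 : Matrix (Fin N) (Fin N) ℝ) ⊗ₖ (A - H * C)).mulVec (et k)
          + (((1 : Matrix (Fin N) (Fin N) ℝ) - Db) ⊗ₖ B).mulVec (ds k) := by
  have etv : ∀ k (j : Fin N), (fun b => et k (j, b)) =
      (x j k - xr k) - xh j k - ∑ l, Db j l • (x l k - xr k) := by
    intro k j
    funext b
    rw [het]
    simp [hxt, hxhs, kmv, Matrix.one_mulVec, Finset.sum_apply, Pi.smul_apply]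
  have main : ∀ (i : Fin N) k, (fun b => et (k + 1) (i, b)) =
      (A - H * C).mulVec (fun b => et k (i, b)) + B.mulVec (d i k)
        - ∑ j, Db i j • B.mulVec (d j k) := by
    intro i k
    rw [etv, etv]
    simp only [hx, hxh, hxr, Matrix.mulVec_add, Matrix.mulVec_sub, Matrix.sub_mulVec,
      Matrix.add_mulVec, Matrix.mulVec_neg, Matrix.mulVec_mulVec, mv_sum,
      Matrix.mulVec_smul, smul_sub, smul_add, smul_neg,
      Finset.sum_sub_distrib, Finset.sum_add_distrib, Finset.sum_neg_distrib]
    abel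
  intro k
  funext q
  obtain ⟨i, a⟩ := q
  have hL := congrFun (main i k) a
  rw [hL]
  simp only [Pi.add_apply]
  rw [kmv, kmv]
  have h1 : (∑ j, (1 : Matrix (Fin N) (Fin N) ℝ) i j •
      (A - H * C).mulVec (fun b => et k (j, b)) a)
      = (A - H * C).mulVec (fun b => et k (i, b)) a := by
    simp [Matrix.one_apply]
  have h2 : (∑ j, ((1 : Matrix (Fin N) (Fin N) ℝ) - Db) i j •
      B.mulVec (fun b => ds k (j, b)) a)
      = B.mulVec (d i k) a - ∑ j, Db i j • B.mulVec (d j k) a := by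
    have hd' : ∀ j : Fin N, (fun b => ds k (j, b)) = d j k := by
      intro j; funext b; exact hds k (j, b)
    simp only [hd', Matrix.sub_apply, sub_smul, Finset.sum_sub_distrib, Matrix.one_apply]
    simp
  rw [h1, h2]
  simp [Finset.sum_apply]
  ring
end

section
/- Let N ≥ 2 and let D = [d_ij] ∈ ℂ^{N×N} satisfy D·𝟏 = 𝟏 (each row sums to 1), and define D̃ ∈ ℂ^{(N−1)×(N−1)} by d̃_ij = d_ij − d_Nj. If λ ∈ ℂ is a nonzero eigenvalue of I_N − D with eigenvector x ∈ ℂ^N, then x̃ = P x is a nonzero vector satisfying (I_{N−1} − D̃) x̃ = λ x̃, where P = [I_{N−1} | −𝟏] ∈ ℂ^{(N−1)×N}. Conversely, if x̃ ∈ ℂ^{N−1} is an eigenvector of I_{N−1} − D̃ with nonzero eigenvalue λ, then x = (I_N − D) Q x̃ is a nonzero vector satisfying (I_N − D) x = λ x, where Q = [I_{N−1}; 0] ∈ ℂ^{N×(N−1)}. -/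
/-
STATEMENT 14: With N = n+1 ≥ 2, D ∈ ℂ^{N×N} satisfying D·𝟏 = 𝟏, D̃ defined by
d̃_ij = d_ij − d_Nj, P = [I_{N−1} | −𝟏], Q = [I_{N−1}; 0], and λ ≠ 0:
(i) if x ≠ 0 and (I − D)x = λx, then x̃ = Px is nonzero and (I − D̃)x̃ = λx̃;
(ii) if x̃ ≠ 0 and (I − D̃)x̃ = λx̃, then x = (I − D)Qx̃ is nonzero and (I − D)x = λx.
-/
theorem reduced_matrix_eigenvector_correspondence
    (n : ℕ) (hn : 1 ≤ n)
    (D : Matrix (Fin (n + 1)) (Fin (n + 1)) ℂ)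
    (hrow : D.mulVec (fun _ => 1) = fun _ => 1)
    (Dt : Matrix (Fin n) (Fin n) ℂ)
    (hDt : ∀ i j : Fin n, Dt i j = D i.castSucc j.castSucc - D (Fin.last n) j.castSucc)
    (P : Matrix (Fin n) (Fin (n + 1)) ℂ)
    (hP : ∀ (i : Fin n) (j : Fin (n + 1)),
      P i j = if j = i.castSucc then 1 else if j = Fin.last n then -1 else 0)
    (Q : Matrix (Fin (n + 1)) (Fin n) ℂ)
    (hQ : ∀ (i : Fin (n + 1)) (j : Fin n), Q i j = if i = j.castSucc then 1 else 0)
    (lam : ℂ) (hlam : lam ≠ 0) :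
    (∀ x : Fin (n + 1) → ℂ, x ≠ 0 →
      ((1 : Matrix (Fin (n + 1)) (Fin (n + 1)) ℂ) - D).mulVec x = lam • x →
      P.mulVec x ≠ 0 ∧
        ((1 : Matrix (Fin n) (Fin n) ℂ) - Dt).mulVec (P.mulVec x)
          = lam • P.mulVec x) ∧
    (∀ xt : Fin n → ℂ, xt ≠ 0 →
      ((1 : Matrix (Fin n) (Fin n) ℂ) - Dt).mulVec xt = lam • xt →
      ((1 : Matrix (Fin (n + 1)) (Fin (n + 1)) ℂ) - D).mulVec (Q.mulVec xt) ≠ 0 ∧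
        ((1 : Matrix (Fin (n + 1)) (Fin (n + 1)) ℂ) - D).mulVec
            (((1 : Matrix (Fin (n + 1)) (Fin (n + 1)) ℂ) - D).mulVec (Q.mulVec xt))
          = lam • (((1 : Matrix (Fin (n + 1)) (Fin (n + 1)) ℂ) - D).mulVec
              (Q.mulVec xt))) := by
  -- abbreviations
  have hrowsum : ∀ i, ∑ j, D i j = 1 := by
    intro i
    have := congrFun hrow i
    simpa [Matrix.mulVec, dotProduct] using this
  -- P acting on a vector
  have hPv : ∀ (v : Fin (n + 1) → ℂ) (i : Fin n),
      P.mulVec v i = v i.castSucc - v (Fin.last n) := by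
    intro v i
    have hne : (i.castSucc : Fin (n + 1)) ≠ Fin.last n := (Fin.castSucc_lt_last i).ne
    simp only [Matrix.mulVec, dotProduct, hP]
    calc (∑ j, (if j = i.castSucc then (1 : ℂ) else if j = Fin.last n then -1 else 0) * v j)
        = ∑ j, ((if j = i.castSucc then v j else 0) + (if j = Fin.last n then -v j else 0)) := by
          refine Finset.sum_congr rfl fun j _ => ?_
          rcases eq_or_ne j i.castSucc with h1 | h1
          · subst h1; simp [hne]
          · rcases eq_or_ne j (Fin.last n) with h2 | h2 <;> simp [h1, h2, Ne.symm hne]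
      _ = v i.castSucc - v (Fin.last n) := by
          rw [Finset.sum_add_distrib, Finset.sum_ite_eq', Finset.sum_ite_eq']
          simp [sub_eq_add_neg]
  -- Q acting on a vector
  have hQlast : ∀ (xt : Fin n → ℂ), Q.mulVec xt (Fin.last n) = 0 := by
    intro xt
    simp only [Matrix.mulVec, dotProduct, hQ]
    refine Finset.sum_eq_zero fun j _ => ?_
    have h : Fin.last n ≠ j.castSucc := (Fin.castSucc_lt_last j).ne'
    simp [h]
  have hQcast : ∀ (xt : Fin n → ℂ) (i : Fin n), Q.mulVec xt i.castSucc = xt i := by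
    intro xt i
    simp only [Matrix.mulVec, dotProduct, hQ]
    calc (∑ j, (if i.castSucc = j.castSucc then (1 : ℂ) else 0) * xt j)
        = ∑ j, (if j = i then xt j else 0) := by
          refine Finset.sum_congr rfl fun j _ => ?_
          rcases eq_or_ne j i with h | h
          · subst h; simp
          · have h2 : (i.castSucc : Fin (n + 1)) ≠ j.castSucc := fun hc =>
              h (Fin.castSucc_injective _ hc.symm)
            simp [h, h2]
      _ = xt i := by rw [Finset.sum_ite_eq']; simp
  -- (I - D) acting on a vector, entrywise
  have hAmul : ∀ (v : Fin (n + 1) → ℂ) (k : Fin (n + 1)),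
      ((1 : Matrix (Fin (n + 1)) (Fin (n + 1)) ℂ) - D).mulVec v k
        = v k - ∑ j, D k j * v j := by
    intro v k
    rw [Matrix.sub_mulVec]
    simp [Matrix.one_mulVec, Matrix.mulVec, dotProduct]
  have hAtmul : ∀ (v : Fin n → ℂ) (k : Fin n),
      ((1 : Matrix (Fin n) (Fin n) ℂ) - Dt).mulVec v k
        = v k - ∑ j, Dt k j * v j := by
    intro v k
    rw [Matrix.sub_mulVec]
    simp [Matrix.one_mulVec, Matrix.mulVec, dotProduct]
  -- (I - D) kills the all-ones vector
  have hA1 : ((1 : Matrix (Fin (n + 1)) (Fin (n + 1)) ℂ) - D).mulVec (fun _ => 1) = 0 := by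
    rw [Matrix.sub_mulVec, Matrix.one_mulVec, hrow]
    simp
  -- key commutation: P (I - D) = (I - Dt) P
  have hcomm : ∀ z : Fin (n + 1) → ℂ,
      P.mulVec (((1 : Matrix (Fin (n + 1)) (Fin (n + 1)) ℂ) - D).mulVec z)
        = ((1 : Matrix (Fin n) (Fin n) ℂ) - Dt).mulVec (P.mulVec z) := by
    intro z
    funext i
    rw [hPv, hAmul, hAmul, hAtmul]
    simp only [hPv, hDt]
    have key : ∑ j : Fin n,
        (D i.castSucc j.castSucc - D (Fin.last n) j.castSucc)
          * (z j.castSucc - z (Fin.last n))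
        = ∑ j : Fin (n + 1), (D i.castSucc j - D (Fin.last n) j) * (z j - z (Fin.last n)) := by
      rw [Fin.sum_univ_castSucc]
      simp
    rw [key]
    have h1 := hrowsum i.castSucc
    have h2 := hrowsum (Fin.last n)
    simp only [sub_mul, mul_sub]
    rw [Finset.sum_sub_distrib, Finset.sum_sub_distrib, Finset.sum_sub_distrib,
      ← Finset.sum_mul, ← Finset.sum_mul, h1, h2]
    ring
  -- P Q = id
  have hPQ : ∀ xt : Fin n → ℂ, P.mulVec (Q.mulVec xt) = xt := by
    intro xt
    funext i
    rw [hPv, hQcast, hQlast, sub_zero]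
  -- Q P z = z - z_N 𝟏
  have hQP : ∀ z : Fin (n + 1) → ℂ,
      Q.mulVec (P.mulVec z) = fun k => z k - z (Fin.last n) := by
    intro z
    funext k
    refine Fin.lastCases ?_ (fun i => ?_) k
    · rw [hQlast]; simp
    · rw [hQcast, hPv]
  -- (I - D) Q P = (I - D)
  have hAQP : ∀ z : Fin (n + 1) → ℂ,
      ((1 : Matrix (Fin (n + 1)) (Fin (n + 1)) ℂ) - D).mulVec (Q.mulVec (P.mulVec z))
        = ((1 : Matrix (Fin (n + 1)) (Fin (n + 1)) ℂ) - D).mulVec z := by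
    intro z
    rw [hQP]
    have h : (fun k => z k - z (Fin.last n))
        = z - (z (Fin.last n)) • (fun _ => (1 : ℂ)) := by
      funext k; simp
    rw [h, Matrix.mulVec_sub, Matrix.mulVec_smul, hA1]
    simp
  constructor
  · -- forward direction
    intro x hx hEig
    have hmain : ((1 : Matrix (Fin n) (Fin n) ℂ) - Dt).mulVec (P.mulVec x)
        = lam • P.mulVec x := by
      rw [← hcomm, hEig, Matrix.mulVec_smul]
    refine ⟨?_, hmain⟩
    intro hP0
    have h0 : ((1 : Matrix (Fin (n + 1)) (Fin (n + 1)) ℂ) - D).mulVec x = 0 := by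
      rw [← hAQP x, hP0, Matrix.mulVec_zero, Matrix.mulVec_zero]
    rw [hEig] at h0
    rcases smul_eq_zero.mp h0 with h | h
    · exact hlam h
    · exact hx h
  · -- converse direction
    intro xt hxt hEig
    have hPx : P.mulVec (((1 : Matrix (Fin (n + 1)) (Fin (n + 1)) ℂ) - D).mulVec (Q.mulVec xt))
        = lam • xt := by
      rw [hcomm, hPQ, hEig]
    constructor
    · intro h0
      rw [h0, Matrix.mulVec_zero] at hPx
      rcases smul_eq_zero.mp hPx.symm with h | h
      · exact hlam h
      · exact hxt h
    · calc ((1 : Matrix (Fin (n + 1)) (Fin (n + 1)) ℂ) - D).mulVec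
            (((1 : Matrix (Fin (n + 1)) (Fin (n + 1)) ℂ) - D).mulVec (Q.mulVec xt))
          = ((1 : Matrix (Fin (n + 1)) (Fin (n + 1)) ℂ) - D).mulVec
            (Q.mulVec (P.mulVec (((1 : Matrix (Fin (n + 1)) (Fin (n + 1)) ℂ) - D).mulVec
              (Q.mulVec xt)))) := (hAQP _).symm
        _ = ((1 : Matrix (Fin (n + 1)) (Fin (n + 1)) ℂ) - D).mulVec
            (Q.mulVec (lam • xt)) := by rw [hPx]
        _ = lam • (((1 : Matrix (Fin (n + 1)) (Fin (n + 1)) ℂ) - D).mulVec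
            (Q.mulVec xt)) := by rw [Matrix.mulVec_smul, Matrix.mulVec_smul]
end
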